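/- Let 0 < b_c < a_c and let k₁, k₁* ∈ (−b_c², 0). Define F(P, k) := x²/(a_c² + k) + y²/(b_c² + k) + z²/k − 1 and let γ(k₁, k₁*) map P = (x, y, z) to P* = (x·√((a_c² + k₁*)/(a_c² + k₁)), y·√((b_c² + k₁*)/(b_c² + k₁)), z·√(k₁*/k₁)). If P satisfies F(P, k₁) = 0 and also F(P, k_j) = 0 for some k_j ∉ {0, −b_c², −a_c²} with k_j ≠ k₁, then P* satisfies F(P*, k₁*) = 0 and F(P*, k_j) = 0. In particular, corresponding points under γ(k₁, k₁*) share the elliptic coordinates k₀ and k₂. -/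

import Mathlib

/-- Corresponding points under the axial scaling `γ(k₁, k₁*)` between confocal
one-sheeted hyperboloids share the elliptic coordinates `k₀` and `k₂`:
if `F(P, k₁) = 0` and `F(P, k_j) = 0`, then `F(P*, k₁*) = 0` and
`F(P*, k_j) = 0`. -/
theorem stmt5 (ac bc k1 k1s kj : ℝ) (hbc : 0 < bc) (hba : bc < ac)
    (hk1 : k1 ∈ Set.Ioo (-bc ^ 2) 0) (hk1s : k1s ∈ Set.Ioo (-bc ^ 2) 0)
    (hkj : kj ≠ 0 ∧ kj ≠ -bc ^ 2 ∧ kj ≠ -ac ^ 2)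
    (hjk1 : kj ≠ k1)
    (F : ℝ → ℝ → ℝ → ℝ → ℝ)
    (hF : ∀ x y z k, F x y z k =
      x ^ 2 / (ac ^ 2 + k) + y ^ 2 / (bc ^ 2 + k) + z ^ 2 / k - 1)
    (x y z : ℝ)
    (h1 : F x y z k1 = 0) (hj : F x y z kj = 0) :
    F (x * Real.sqrt ((ac ^ 2 + k1s) / (ac ^ 2 + k1)))
      (y * Real.sqrt ((bc ^ 2 + k1s) / (bc ^ 2 + k1)))
      (z * Real.sqrt (k1s / k1)) k1s = 0 ∧
    F (x * Real.sqrt ((ac ^ 2 + k1s) / (ac ^ 2 + k1)))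
      (y * Real.sqrt ((bc ^ 2 + k1s) / (bc ^ 2 + k1)))
      (z * Real.sqrt (k1s / k1)) kj = 0 := by
  obtain ⟨hk1a, hk1b⟩ := hk1
  obtain ⟨hk1sa, hk1sb⟩ := hk1s
  obtain ⟨hkj0, hkjb, hkja⟩ := hkj
  have hbalt : bc ^ 2 < ac ^ 2 := by nlinarith
  have hA1 : 0 < ac ^ 2 + k1 := by nlinarith
  have hB1 : 0 < bc ^ 2 + k1 := by nlinarith
  have hA1s : 0 < ac ^ 2 + k1s := by nlinarith
  have hB1s : 0 < bc ^ 2 + k1s := by nlinarith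
  have hAj : ac ^ 2 + kj ≠ 0 := fun h => hkja (by linarith)
  have hBj : bc ^ 2 + kj ≠ 0 := fun h => hkjb (by linarith)
  have hrx : Real.sqrt ((ac ^ 2 + k1s) / (ac ^ 2 + k1)) ^ 2 = (ac ^ 2 + k1s) / (ac ^ 2 + k1) :=
    Real.sq_sqrt (by positivity)
  have hry : Real.sqrt ((bc ^ 2 + k1s) / (bc ^ 2 + k1)) ^ 2 = (bc ^ 2 + k1s) / (bc ^ 2 + k1) :=
    Real.sq_sqrt (by positivity)
  have hrz : Real.sqrt (k1s / k1) ^ 2 = k1s / k1 :=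
    Real.sq_sqrt (le_of_lt (div_pos_of_neg_of_neg hk1sb hk1b))
  rw [hF] at h1 hj
  rw [hF, hF, mul_pow, mul_pow, mul_pow, hrx, hry, hrz]
  have hk1ne : k1 ≠ 0 := ne_of_lt hk1b
  have hk1sne : k1s ≠ 0 := ne_of_lt hk1sb
  field_simp at h1 hj ⊢
  constructor
  · linear_combination h1
  · apply mul_left_cancel₀ (sub_ne_zero.mpr hjk1)
    linear_combination ((kj - k1s) * (ac ^ 2 + k1) * (bc ^ 2 + k1) * k1) * hj +
      ((k1s - k1) * (ac ^ 2 + kj) * (bc ^ 2 + kj) * kj) * h1
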